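/- (Criterion 2.6.) Let κ be a measurable cardinal and let I be a suborder of the linear order J. Suppose that for every t ∈ J \ I, either the set {s ∈ I : s < t} has a cofinal subset of order type κ (equivalently, cofinality κ, since κ is regular), or the set {s ∈ I : s > t} has a coinitial subset whose reverse order has order type κ. Then I is nicely embedded in J. -/

import Mathlib

open Filter Cardinal

universe u v w

/-- `I` is nicely embedded in `J` (along the inclusion `e : I ↪o J`): there are a nonempty
set `S` and an ultrafilter `D` on `S` together with an order embedding of `J` into the
ultrapower `I^S/D` whose restriction to `I` is the canonical diagonal embedding. -/
def NicelyEmbedded {I : Type u} {J : Type v} [LinearOrder I] [LinearOrder J]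
    (e : I ↪o J) : Prop :=
  ∃ (S : Type w) (_ : Nonempty S) (D : Ultrafilter S)
    (g : J ↪o Filter.Germ (D : Filter S) I),
    ∀ t : I, g (e t) = (↑t : Filter.Germ (D : Filter S) I)

/-- `κ` is a measurable cardinal: it is uncountable and carries a `κ`-complete
nonprincipal ultrafilter on `κ`. -/
def IsMeasurableCardinal (κ : Cardinal.{u}) : Prop :=
  ℵ₀ < κ ∧ ∃ D : Ultrafilter κ.ord.ToType,
    (∀ x, D ≠ pure x) ∧ CardinalInterFilter (D : Filter κ.ord.ToType) κ

/-- The set `{s ∈ A : s < t}` has a cofinal subset of order type `κ`. -/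
def HasCofinalKappaChainBelow (κ : Cardinal.{u}) {J : Type v} [LinearOrder J]
    (A : Set J) (t : J) : Prop :=
  ∃ f : κ.ord.ToType → J, StrictMono f ∧ (∀ a, f a ∈ A ∧ f a < t) ∧
    ∀ s ∈ A, s < t → ∃ a, s ≤ f a

/-- The set `{s ∈ A : t < s}` has a coinitial subset whose reverse order has order
type `κ`. -/
def HasCoinitialKappaChainAbove (κ : Cardinal.{u}) {J : Type v} [LinearOrder J]
    (A : Set J) (t : J) : Prop :=
  ∃ f : κ.ord.ToType → J, StrictAnti f ∧ (∀ a, f a ∈ A ∧ t < f a) ∧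
    ∀ s ∈ A, t < s → ∃ a, f a ≤ s

section Aux

open scoped Classical

variable {J : Type v} [LinearOrder J]

/-- Two points of `J` determine the same Dedekind cut of `I`. -/
def SameCut (I : Set J) (t u : J) : Prop := ∀ s ∈ I, (s < t ↔ s < u)

theorem SameCut.rfl {I : Set J} {t : J} : SameCut I t t := fun _ _ => Iff.rfl

theorem SameCut.symm {I : Set J} {t u : J} (h : SameCut I t u) : SameCut I u t :=
  fun s hs => (h s hs).symm

theorem SameCut.trans {I : Set J} {t u w : J} (h1 : SameCut I t u) (h2 : SameCut I u w) :
    SameCut I t w := fun s hs => (h1 s hs).trans (h2 s hs)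

/-- Elements of the finite context `F` lying outside `I` and in the same cut class as `t`. -/
noncomputable def Kset (I : Set J) (F : Finset J) (t : J) : Finset J :=
  F.filter (fun v => v ∉ I ∧ SameCut I v t)

theorem mem_Kset {I : Set J} {F : Finset J} {t v : J} :
    v ∈ Kset I F t ↔ v ∈ F ∧ v ∉ I ∧ SameCut I v t := Finset.mem_filter

theorem Kset_congr {I : Set J} {F : Finset J} {t u : J} (h : SameCut I t u) :
    Kset I F t = Kset I F u := by
  unfold Kset
  apply Finset.filter_congr
  intro v _
  exact and_congr_right fun _ => ⟨fun hh => hh.trans h, fun hh => hh.trans h.symm⟩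

/-- A chosen cofinal chain below `x` (junk value if none exists). -/
noncomputable def belChain (κ : Cardinal.{u}) (I : Set J) (x : J) : κ.ord.ToType → J :=
  if h : HasCofinalKappaChainBelow κ I x then h.choose else fun _ => x

/-- A chosen coinitial chain above `x` (junk value if none exists). -/
noncomputable def abvChain (κ : Cardinal.{u}) (I : Set J) (x : J) : κ.ord.ToType → J :=
  if h : HasCoinitialKappaChainAbove κ I x then h.choose else fun _ => x

theorem belChain_spec {κ : Cardinal.{u}} {I : Set J} {x : J}
    (h : HasCofinalKappaChainBelow κ I x) :
    StrictMono (belChain κ I x) ∧ (∀ a, belChain κ I x a ∈ I ∧ belChain κ I x a < x) ∧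
      ∀ s ∈ I, s < x → ∃ a, s ≤ belChain κ I x a := by
  unfold belChain; rw [dif_pos h]; exact h.choose_spec

theorem abvChain_spec {κ : Cardinal.{u}} {I : Set J} {x : J}
    (h : HasCoinitialKappaChainAbove κ I x) :
    StrictAnti (abvChain κ I x) ∧ (∀ a, abvChain κ I x a ∈ I ∧ x < abvChain κ I x a) ∧
      ∀ s ∈ I, x < s → ∃ a, abvChain κ I x a ≤ s := by
  unfold abvChain; rw [dif_pos h]; exact h.choose_spec

/-- The value in `I` assigned to `t` in the finite context `F` at stage `a`. -/
noncomputable def phi (κ : Cardinal.{u}) (I : Set J) (stp : κ.ord.ToType → κ.ord.ToType)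
    (t : J) (a : κ.ord.ToType) (F : Finset J) : J :=
  if t ∈ I then t
  else if hK : (Kset I F t).Nonempty then
    (if HasCofinalKappaChainBelow κ I ((Kset I F t).min' hK) then
      belChain κ I ((Kset I F t).min' hK)
        (stp^[((Kset I F t).filter (fun v => v < t)).card] a)
    else
      abvChain κ I ((Kset I F t).min' hK)
        (stp^[((Kset I F t).filter (fun v => t < v)).card] a))
  else t

theorem phi_of_mem {κ : Cardinal.{u}} {I : Set J} {stp : κ.ord.ToType → κ.ord.ToType}
    {t : J} (ht : t ∈ I) (a : κ.ord.ToType) (F : Finset J) :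
    phi κ I stp t a F = t := by
  unfold phi; rw [if_pos ht]

theorem phi_unfold {κ : Cardinal.{u}} {I : Set J} {stp : κ.ord.ToType → κ.ord.ToType}
    {t : J} (ht : t ∉ I) {F : Finset J} {K : Finset J} (hKd : Kset I F t = K)
    (hK : K.Nonempty) (a : κ.ord.ToType) :
    phi κ I stp t a F =
      if HasCofinalKappaChainBelow κ I (K.min' hK) then
        belChain κ I (K.min' hK) (stp^[(K.filter (fun v => v < t)).card] a)
      else abvChain κ I (K.min' hK) (stp^[(K.filter (fun v => t < v)).card] a) := by
  subst hKd; unfold phi; rw [if_neg ht, dif_pos hK]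

theorem le_iter {α : Type*} [Preorder α] {stp : α → α} (hstp : ∀ x, x < stp x)
    (n : ℕ) (a : α) : a ≤ stp^[n] a := by
  induction n with
  | zero => exact le_rfl
  | succ n ih =>
    rw [Function.iterate_succ_apply']
    exact ih.trans (hstp _).le

theorem iter_lt {α : Type*} [Preorder α] {stp : α → α} (hstp : ∀ x, x < stp x)
    {n m : ℕ} (h : n < m) (a : α) : stp^[n] a < stp^[m] a :=
  (strictMono_nat_of_lt_succ (f := fun k => stp^[k] a)
    (fun k => by
      show stp^[k] a < stp^[k + 1] a
      rw [Function.iterate_succ_apply']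
      exact hstp _)) h

section Core

variable {κ : Cardinal.{u}} {I : Set J}
  (hcut : ∀ t : J, t ∉ I →
    HasCofinalKappaChainBelow κ I t ∨ HasCoinitialKappaChainAbove κ I t)
  {stp : κ.ord.ToType → κ.ord.ToType} (hstp : ∀ x, x < stp x) (b0 : κ.ord.ToType)

include hcut hstp b0

theorem philow {F : Finset J} {t w : J} (ht : t ∉ I) (htF : t ∈ F)
    (hw : w ∈ I) (hwt : w < t) :
    ∃ b, ∀ a, b ≤ a → phi κ I stp t a F ∈ I ∧ w < phi κ I stp t a F := by
  have hKt : t ∈ Kset I F t := mem_Kset.mpr ⟨htF, ht, SameCut.rfl⟩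
  have hK : (Kset I F t).Nonempty := ⟨t, hKt⟩
  obtain ⟨-, hmI, hsc⟩ := mem_Kset.mp ((Kset I F t).min'_mem hK)
  have hwm : w < (Kset I F t).min' hK := (hsc w hw).mpr hwt
  by_cases hb : HasCofinalKappaChainBelow κ I ((Kset I F t).min' hK)
  · obtain ⟨hmono, hval, hcof⟩ := belChain_spec hb
    obtain ⟨c, hc⟩ := hcof w hw hwm
    refine ⟨stp c, fun a ha => ?_⟩
    rw [phi_unfold ht rfl hK, if_pos hb]
    refine ⟨(hval _).1, hc.trans_lt (hmono ?_)⟩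
    exact (hstp c).trans_le (ha.trans (le_iter hstp _ _))
  · have ha' := (hcut _ hmI).resolve_left hb
    obtain ⟨hmono, hval, hcoi⟩ := abvChain_spec ha'
    refine ⟨b0, fun a _ => ?_⟩
    rw [phi_unfold ht rfl hK, if_neg hb]
    exact ⟨(hval _).1, hwm.trans (hval _).2⟩

theorem phihigh {F : Finset J} {t w : J} (ht : t ∉ I) (htF : t ∈ F)
    (hw : w ∈ I) (htw : t < w) :
    ∃ b, ∀ a, b ≤ a → phi κ I stp t a F ∈ I ∧ phi κ I stp t a F < w := by
  have hKt : t ∈ Kset I F t := mem_Kset.mpr ⟨htF, ht, SameCut.rfl⟩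
  have hK : (Kset I F t).Nonempty := ⟨t, hKt⟩
  obtain ⟨-, hmI, hsc⟩ := mem_Kset.mp ((Kset I F t).min'_mem hK)
  have hmw : (Kset I F t).min' hK < w := by
    have h1 : ¬ w < (Kset I F t).min' hK :=
      fun hh => absurd ((hsc w hw).mp hh) (not_lt.mpr htw.le)
    exact lt_of_le_of_ne (not_lt.mp h1) (fun he => hmI (he ▸ hw))
  by_cases hb : HasCofinalKappaChainBelow κ I ((Kset I F t).min' hK)
  · obtain ⟨hmono, hval, hcof⟩ := belChain_spec hb
    refine ⟨b0, fun a _ => ?_⟩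
    rw [phi_unfold ht rfl hK, if_pos hb]
    exact ⟨(hval _).1, ((hsc _ (hval _).1).mp (hval _).2).trans htw⟩
  · have ha' := (hcut _ hmI).resolve_left hb
    obtain ⟨hmono, hval, hcoi⟩ := abvChain_spec ha'
    obtain ⟨c, hc⟩ := hcoi w hw hmw
    refine ⟨stp c, fun a ha => ?_⟩
    rw [phi_unfold ht rfl hK, if_neg hb]
    refine ⟨(hval _).1, lt_of_lt_of_le (hmono ?_) hc⟩
    exact (hstp c).trans_le (ha.trans (le_iter hstp _ _))

theorem phicore {F : Finset J} {t u : J} (htF : t ∈ F) (huF : u ∈ F) (htu : t < u) :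
    ∃ b, ∀ a, b ≤ a → phi κ I stp t a F ∈ I ∧ phi κ I stp u a F ∈ I ∧
      phi κ I stp t a F < phi κ I stp u a F := by
  by_cases ht : t ∈ I <;> by_cases hu : u ∈ I
  · exact ⟨b0, fun a _ => by rw [phi_of_mem ht, phi_of_mem hu]; exact ⟨ht, hu, htu⟩⟩
  · obtain ⟨b, hb⟩ := philow hcut hstp b0 hu huF ht htu
    exact ⟨b, fun a ha => by
      rw [phi_of_mem ht]; exact ⟨ht, (hb a ha).1, (hb a ha).2⟩⟩
  · obtain ⟨b, hb⟩ := phihigh hcut hstp b0 ht htF hu htu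
    exact ⟨b, fun a ha => by
      rw [phi_of_mem hu]; exact ⟨(hb a ha).1, hu, (hb a ha).2⟩⟩
  · by_cases hsc : SameCut I t u
    · have hKt : t ∈ Kset I F t := mem_Kset.mpr ⟨htF, ht, SameCut.rfl⟩
      have hKu : u ∈ Kset I F t := mem_Kset.mpr ⟨huF, hu, hsc.symm⟩
      have hK : (Kset I F t).Nonempty := ⟨t, hKt⟩
      have hKd : Kset I F u = Kset I F t := (Kset_congr hsc).symm
      obtain ⟨-, hmI, -⟩ := mem_Kset.mp ((Kset I F t).min'_mem hK)
      refine ⟨b0, fun a _ => ?_⟩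
      rw [phi_unfold ht rfl hK, phi_unfold hu hKd hK]
      by_cases hb : HasCofinalKappaChainBelow κ I ((Kset I F t).min' hK)
      · rw [if_pos hb, if_pos hb]
        obtain ⟨hmono, hval, -⟩ := belChain_spec hb
        refine ⟨(hval _).1, (hval _).1, hmono (iter_lt hstp ?_ _)⟩
        apply Finset.card_lt_card
        have hsub : (Kset I F t).filter (fun v => v < t) ⊆
            (Kset I F t).filter (fun v => v < u) := fun x hx =>
          Finset.mem_filter.mpr ⟨(Finset.mem_filter.mp hx).1,
            ((Finset.mem_filter.mp hx).2).trans htu⟩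
        refine (Finset.ssubset_iff_of_subset hsub).mpr
          ⟨t, Finset.mem_filter.mpr ⟨hKt, htu⟩, fun hh => ?_⟩
        exact lt_irrefl t (Finset.mem_filter.mp hh).2
      · rw [if_neg hb, if_neg hb]
        have ha' := (hcut _ hmI).resolve_left hb
        obtain ⟨hmono, hval, -⟩ := abvChain_spec ha'
        refine ⟨(hval _).1, (hval _).1, hmono (iter_lt hstp ?_ _)⟩
        apply Finset.card_lt_card
        have hsub : (Kset I F t).filter (fun v => u < v) ⊆
            (Kset I F t).filter (fun v => t < v) := fun x hx =>
          Finset.mem_filter.mpr ⟨(Finset.mem_filter.mp hx).1,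
            htu.trans (Finset.mem_filter.mp hx).2⟩
        refine (Finset.ssubset_iff_of_subset hsub).mpr
          ⟨u, Finset.mem_filter.mpr ⟨hKu, htu⟩, fun hh => ?_⟩
        exact lt_irrefl u (Finset.mem_filter.mp hh).2
    · have hex : ∃ w ∈ I, t < w ∧ w < u := by
        unfold SameCut at hsc
        push_neg at hsc
        obtain ⟨s, hsI, hiff⟩ := hsc
        rcases hiff with ⟨hh1, hh2⟩ | ⟨hh1, hh2⟩
        · exact absurd (hh1.trans htu) (not_lt.mpr hh2)
        · exact ⟨s, hsI, lt_of_le_of_ne hh1 (fun he => ht (he ▸ hsI)), hh2⟩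
      obtain ⟨w, hwI, htw, hwu⟩ := hex
      obtain ⟨b1, h1⟩ := phihigh hcut hstp b0 ht htF hwI htw
      obtain ⟨b2, h2⟩ := philow hcut hstp b0 hu huF hwI hwu
      refine ⟨max b1 b2, fun a ha => ?_⟩
      obtain ⟨m1, m2⟩ := h1 a ((le_max_left _ _).trans ha)
      obtain ⟨m3, m4⟩ := h2 a ((le_max_right _ _).trans ha)
      exact ⟨m1, m3, m2.trans m4⟩

end Core

/-- The function into `I` whose germs give the embedding. -/
noncomputable def Gdef (κ : Cardinal.{u}) (I : Set J) (stp : κ.ord.ToType → κ.ord.ToType)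
    (d : ↥I) (t : J) (s : κ.ord.ToType × Finset J) : ↥I :=
  if h : phi κ I stp t s.1 s.2 ∈ I then ⟨phi κ I stp t s.1 s.2, h⟩ else d

theorem Gdef_of_mem {κ : Cardinal.{u}} {I : Set J} {stp : κ.ord.ToType → κ.ord.ToType}
    {d : ↥I} {t : J} (ht : t ∈ I) (s : κ.ord.ToType × Finset J) :
    Gdef κ I stp d t s = ⟨t, ht⟩ := by
  unfold Gdef
  simp only [phi_of_mem ht]
  rw [dif_pos ht]

theorem Gdef_lt {κ : Cardinal.{u}} {I : Set J} {stp : κ.ord.ToType → κ.ord.ToType}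
    {d : ↥I} {t u : J} {s : κ.ord.ToType × Finset J}
    (h1 : phi κ I stp t s.1 s.2 ∈ I) (h2 : phi κ I stp u s.1 s.2 ∈ I)
    (h3 : phi κ I stp t s.1 s.2 < phi κ I stp u s.1 s.2) :
    Gdef κ I stp d t s < Gdef κ I stp d u s := by
  unfold Gdef
  rw [dif_pos h1, dif_pos h2]
  exact Subtype.mk_lt_mk.mpr h3

end Aux

/-- Criterion 2.6: let `κ` be a measurable cardinal and `I` a suborder of `J`. If every
`t ∈ J \ I` has, on one of the two sides of the Dedekind cut it defines in `I`, a
cofinal (resp. coinitial) chain of order type `κ` (resp. reversed `κ`), then `I` is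
nicely embedded in `J`. -/
theorem nicelyEmbedded_of_criterion (κ : Cardinal.{u})
    (hκ : IsMeasurableCardinal κ) (J : Type v) [LinearOrder J] (I : Set J)
    (hcut : ∀ t : J, t ∉ I →
      HasCofinalKappaChainBelow κ I t ∨ HasCoinitialKappaChainAbove κ I t) :
    NicelyEmbedded.{v, v, max u v} (OrderEmbedding.subtype (· ∈ I)) := by
  classical
  obtain ⟨hκ0, -⟩ := hκ
  have hT : Nonempty κ.ord.ToType :=
    Ordinal.toType_nonempty_iff_ne_zero.mpr (Cardinal.isSuccLimit_ord hκ0.le).pos.ne'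
  haveI := hT
  by_cases hIe : Nonempty ↥I
  · -- main case
    haveI := hIe
    haveI : NoMaxOrder κ.ord.ToType := Cardinal.noMaxOrder hκ0.le
    choose stp hstp using fun a : κ.ord.ToType => exists_gt a
    set d : ↥I := Classical.arbitrary ↥I with hd
    set G : J → κ.ord.ToType × Finset J → ↥I := Gdef κ I stp d with hG
    -- finite intersection property
    have pairlem : ∀ (P : Finset (J × J)) (F : Finset J), (∀ p ∈ P, p.1 < p.2) →
        (∀ p ∈ P, p.1 ∈ F ∧ p.2 ∈ F) →
        ∃ b : κ.ord.ToType, ∀ a, b ≤ a → ∀ p ∈ P,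
          G p.1 (a, F) < G p.2 (a, F) := by
      intro P F
      induction P using Finset.induction_on with
      | empty =>
        exact fun _ _ => ⟨Classical.arbitrary _, fun a _ p hp =>
          absurd hp (Finset.notMem_empty p)⟩
      | @insert q P hq ih =>
        intro hlt hmem
        obtain ⟨b1, h1⟩ := ih (fun p hp => hlt p (Finset.mem_insert_of_mem hp))
          (fun p hp => hmem p (Finset.mem_insert_of_mem hp))
        obtain ⟨b2, h2⟩ := phicore hcut hstp (Classical.arbitrary κ.ord.ToType)
          (hmem q (Finset.mem_insert_self q P)).1
          (hmem q (Finset.mem_insert_self q P)).2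
          (hlt q (Finset.mem_insert_self q P))
        refine ⟨max b1 b2, fun a ha p hp => ?_⟩
        rcases Finset.mem_insert.mp hp with rfl | hp'
        · obtain ⟨m1, m2, m3⟩ := h2 a ((le_max_right _ _).trans ha)
          exact Gdef_lt m1 m2 m3
        · exact h1 a ((le_max_left _ _).trans ha) p hp'
    set 𝒜 : Set (Set (κ.ord.ToType × Finset J)) :=
      {A | ∃ p : J × J, p.1 < p.2 ∧ A = {s | G p.1 s < G p.2 s}} with hA
    have key : ∀ Tf : Finset (Set (κ.ord.ToType × Finset J)),
        ↑Tf ⊆ 𝒜 → ∃ P : Finset (J × J), (∀ p ∈ P, p.1 < p.2) ∧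
        ∀ A ∈ Tf, ∃ p ∈ P, A = {s | G p.1 s < G p.2 s} := by
      intro Tf
      induction Tf using Finset.induction_on with
      | empty =>
        exact fun _ => ⟨∅, fun p hp => absurd hp (Finset.notMem_empty p),
          fun A hA => absurd hA (Finset.notMem_empty A)⟩
      | @insert B Tf hB ih =>
        intro hsub
        obtain ⟨P, hP1, hP2⟩ := ih (fun C hC =>
          hsub (Finset.mem_coe.mpr (Finset.mem_insert_of_mem (Finset.mem_coe.mp hC))))
        obtain ⟨p, hp1, hp2⟩ := hsub (Finset.mem_coe.mpr (Finset.mem_insert_self B Tf))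
        refine ⟨insert p P, ?_, ?_⟩
        · intro q hq
          rcases Finset.mem_insert.mp hq with rfl | hq'
          · exact hp1
          · exact hP1 q hq'
        · intro A hA'
          rcases Finset.mem_insert.mp hA' with rfl | hA''
          · exact ⟨p, Finset.mem_insert_self p P, hp2⟩
          · obtain ⟨q, hq1, hq2⟩ := hP2 A hA''
            exact ⟨q, Finset.mem_insert_of_mem hq1, hq2⟩
    have hFIP : ∀ Tf : Finset (Set (κ.ord.ToType × Finset J)),
        (↑Tf : Set (Set (κ.ord.ToType × Finset J))) ⊆ 𝒜 →
        (⋂₀ (↑Tf : Set (Set (κ.ord.ToType × Finset J)))).Nonempty := by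
      intro Tf hTf
      obtain ⟨P, hP1, hP2⟩ := key Tf hTf
      set F : Finset J := P.image Prod.fst ∪ P.image Prod.snd with hF
      obtain ⟨b, hb⟩ := pairlem P F hP1 (fun p hp =>
        ⟨Finset.mem_union_left _ (Finset.mem_image_of_mem _ hp),
         Finset.mem_union_right _ (Finset.mem_image_of_mem _ hp)⟩)
      refine ⟨(b, F), ?_⟩
      rw [Set.mem_sInter]
      intro A hA'
      obtain ⟨p, hpP, rfl⟩ := hP2 A (Finset.mem_coe.mp hA')
      exact hb b le_rfl p hpP
    obtain ⟨D, hD⟩ := Ultrafilter.exists_ultrafilter_of_finite_inter_nonempty 𝒜 hFIP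
    have hmono : StrictMono (fun t : J => ((G t : _) : Germ (D : Filter (κ.ord.ToType × Finset J)) ↥I)) := by
      intro t u htu
      have hmem : {s | G t s < G u s} ∈ (D : Filter (κ.ord.ToType × Finset J)) := hD ⟨(t, u), htu, rfl⟩
      have hev : ∀ᶠ s in (D : Filter (κ.ord.ToType × Finset J)), G t s < G u s := hmem
      have hle : ((G t : _) : Germ (D : Filter (κ.ord.ToType × Finset J)) ↥I) ≤ (G u : _) :=
        Filter.Germ.coe_le.mpr (hev.mono fun s hs => hs.le)
      refine lt_of_le_of_ne hle fun heq => ?_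
      have heq' := Filter.Germ.coe_eq.mp heq
      obtain ⟨s, hs1, hs2⟩ := (heq'.and hev).exists
      exact absurd hs1 (ne_of_lt hs2)
    refine ⟨κ.ord.ToType × Finset J, ⟨(Classical.arbitrary _, ∅)⟩, D,
      OrderEmbedding.ofStrictMono _ hmono, fun t => ?_⟩
    show ((G ((OrderEmbedding.subtype (· ∈ I)) t) : _) : Germ (D : Filter (κ.ord.ToType × Finset J)) ↥I) = ↑t
    have hGt : G ((OrderEmbedding.subtype (· ∈ I)) t) = fun _ => t := by
      funext s
      rw [hG]
      show Gdef κ I stp d (↑t) s = t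
      rw [Gdef_of_mem t.2]
    rw [hGt]
    rfl
  · -- degenerate case : I is empty, hence J is empty
    haveI : IsEmpty ↥I := not_nonempty_iff.mp hIe
    haveI hJ : IsEmpty J := by
      constructor
      intro t
      have ht : t ∉ I := fun h => hIe ⟨t, h⟩
      rcases hcut t ht with ⟨f, -, hf, -⟩ | ⟨f, -, hf, -⟩ <;>
        exact IsEmpty.false (⟨f (Classical.arbitrary _), (hf _).1⟩ : ↥I)
    exact ⟨κ.ord.ToType × Finset J, ⟨(Classical.arbitrary _, ∅)⟩,
      pure (Classical.arbitrary _, ∅), OrderEmbedding.ofIsEmpty,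
      fun t => isEmptyElim t⟩
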